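/- arXiv:1101.0263 — 4 statements merged into one kernel-verified Lean document; each statement's English description precedes it below -/
import Mathlib

section
/- Let G be a finite group of orthogonal d×d real matrices acting irreducibly on ℝ^d. Then for every row vector z ∈ ℝ^d and every d×m real matrix Y, (1/|G|)·∑_{U ∈ G} |zUY|² = (1/d)·|z|²·‖Y‖²_HS. -/
open Matrix

private lemma sum_mulVec' {n N : Type*} [Fintype n] (f : N → Matrix n n ℝ)
    (s : Finset N) (v : n → ℝ) : (∑ i ∈ s, f i) *ᵥ v = ∑ i ∈ s, f i *ᵥ v := by
  ext i
  simp [Matrix.mulVec, dotProduct, Matrix.sum_apply, Finset.sum_apply,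
    Finset.sum_mul]
  rw [Finset.sum_comm]

private lemma dotProduct_sum' {n N : Type*} [Fintype n] (f : N → (n → ℝ))
    (s : Finset N) (v : n → ℝ) : v ⬝ᵥ (∑ i ∈ s, f i) = ∑ i ∈ s, v ⬝ᵥ f i := by
  simp [dotProduct, Finset.sum_apply, Finset.mul_sum]
  rw [Finset.sum_comm]

/-- tight frame identity for a finite irreducible group of orthogonal
matrices. -/
theorem tight_frame_identity_finite {d m : ℕ} (hd : 0 < d)
    (G : Finset (Matrix (Fin d) (Fin d) ℝ))
    (hGorth : ∀ U ∈ G, U ∈ Matrix.orthogonalGroup (Fin d) ℝ)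
    (hGone : (1 : Matrix (Fin d) (Fin d) ℝ) ∈ G)
    (hGmul : ∀ U ∈ G, ∀ V ∈ G, U * V ∈ G)
    (hGinv : ∀ U ∈ G, U⁻¹ ∈ G)
    (hirr : ∀ x : Fin d → ℝ, x ≠ 0 →
      Submodule.span ℝ {y : Fin d → ℝ | ∃ U ∈ G, y = U.mulVec x} = ⊤)
    (z : Fin d → ℝ) (Y : Matrix (Fin d) (Fin m) ℝ) :
    (1 / (G.card : ℝ)) * ∑ U ∈ G, ∑ k, (Matrix.vecMul z (U * Y)) k ^ 2
      = (1 / (d : ℝ)) * (∑ i, z i ^ 2) * (∑ j, ∑ k, Y j k ^ 2) := by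
  have hstar : ∀ B : Matrix (Fin d) (Fin d) ℝ, star B = Bᵀ := by
    intro B; ext i j; simp [Matrix.star_apply]
  have hct : ∀ B : Matrix (Fin d) (Fin d) ℝ, Bᴴ = Bᵀ := by
    intro B; ext i j; simp
  have horth1 : ∀ U ∈ G, U * Uᵀ = 1 := by
    intro U hU
    have := (Matrix.mem_orthogonalGroup_iff (Fin d) ℝ).mp (hGorth U hU)
    exact this
  have horth2 : ∀ U ∈ G, Uᵀ * U = 1 := by
    intro U hU
    have := (Matrix.mem_orthogonalGroup_iff' (Fin d) ℝ).mp (hGorth U hU)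
    exact this
  set A : Matrix (Fin d) (Fin d) ℝ := Y * Yᵀ with hA
  set M : Matrix (Fin d) (Fin d) ℝ := ∑ U ∈ G, U * A * Uᵀ with hM
  -- M commutes with every V ∈ G
  have hcomm : ∀ V ∈ G, V * M = M * V := by
    intro V hV
    have hVinv : V⁻¹ = Vᵀ := Matrix.inv_eq_left_inv (horth2 V hV)
    rw [hM, Finset.mul_sum, Finset.sum_mul]
    refine Finset.sum_nbij' (fun U => V * U) (fun W => V⁻¹ * W) ?_ ?_ ?_ ?_ ?_
    · intro U hU; exact hGmul V hV U hU
    · intro W hW; exact hGmul _ (hGinv V hV) W hW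
    · intro U hU
      show V⁻¹ * (V * U) = U
      rw [← mul_assoc, hVinv, horth2 V hV, one_mul]
    · intro W hW
      show V * (V⁻¹ * W) = W
      rw [← mul_assoc, hVinv, horth1 V hV, one_mul]
    · intro U hU
      show V * (U * A * Uᵀ) = (V * U) * A * (V * U)ᵀ * V
      rw [Matrix.transpose_mul]
      calc V * (U * A * Uᵀ) = V * U * A * Uᵀ * 1 := by noncomm_ring
        _ = V * U * A * Uᵀ * (Vᵀ * V) := by rw [horth2 V hV]
        _ = V * U * A * (Uᵀ * Vᵀ) * V := by noncomm_ring
  -- M is symmetric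
  have hMh : M.IsHermitian := by
    rw [Matrix.IsHermitian, hct, hM, Matrix.transpose_sum]
    refine Finset.sum_congr rfl ?_
    intro U hU
    rw [Matrix.transpose_mul, Matrix.transpose_mul, Matrix.transpose_transpose,
      hA, Matrix.transpose_mul, Matrix.transpose_transpose, ← hA, mul_assoc]
  set j0 : Fin d := ⟨0, hd⟩
  set μ : ℝ := hMh.eigenvalues j0 with hμ
  set v : Fin d → ℝ := (WithLp.equiv 2 (Fin d → ℝ)) (hMh.eigenvectorBasis j0) with hv
  have hveig : M *ᵥ v = μ • v := hMh.mulVec_eigenvectorBasis j0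
  have hvne : v ≠ 0 := by
    intro h
    exact hMh.eigenvectorBasis.toBasis.ne_zero j0 (by simpa [hv] using h)
  -- Schur: every vector is a μ-eigenvector
  have hall : ∀ x : Fin d → ℝ, M *ᵥ x = μ • x := by
    intro x
    have hspan := hirr v hvne
    have hle : Submodule.span ℝ {y : Fin d → ℝ | ∃ U ∈ G, y = U.mulVec v}
        ≤ Module.End.eigenspace (Matrix.mulVecLin M) μ := by
      rw [Submodule.span_le]
      rintro y ⟨U, hU, rfl⟩
      rw [SetLike.mem_coe, Module.End.mem_eigenspace_iff]
      show M *ᵥ (U *ᵥ v) = μ • (U *ᵥ v)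
      rw [Matrix.mulVec_mulVec, ← hcomm U hU, ← Matrix.mulVec_mulVec, hveig,
        Matrix.mulVec_smul]
    rw [hspan, top_le_iff] at hle
    have : x ∈ Module.End.eigenspace (Matrix.mulVecLin M) μ := by rw [hle]; trivial
    rwa [Module.End.mem_eigenspace_iff] at this
  -- diagonal entries of M
  have hdiag : ∀ i : Fin d, M i i = μ := by
    intro i
    have := congrFun (hall (Pi.single i 1)) i
    simpa [Matrix.mulVec_single] using this
  -- trace two ways
  have htr1 : M.trace = d * μ := by
    rw [Matrix.trace]
    simp only [Matrix.diag]
    rw [Finset.sum_congr rfl (fun i _ => hdiag i)]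
    simp [mul_comm]
  have htr2 : M.trace = (G.card : ℝ) * A.trace := by
    rw [hM, Matrix.trace_sum]
    rw [Finset.sum_congr rfl (fun U hU => by
      rw [Matrix.trace_mul_cycle, horth2 U hU, one_mul])]
    simp [mul_comm]
  have htrA : A.trace = ∑ j, ∑ k, Y j k ^ 2 := by
    rw [hA, Matrix.trace]
    simp [Matrix.mul_apply, sq]
  have hG0 : (G.card : ℝ) ≠ 0 :=
    Nat.cast_ne_zero.mpr (Finset.card_pos.mpr ⟨1, hGone⟩).ne'
  -- rewrite each summand
  have hsum : ∀ U ∈ G, ∑ k, (Matrix.vecMul z (U * Y)) k ^ 2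
      = z ⬝ᵥ ((U * A * Uᵀ) *ᵥ z) := by
    intro U hU
    have h1 : ∑ k, (Matrix.vecMul z (U * Y)) k ^ 2
        = (z ᵥ* (U * Y)) ⬝ᵥ (z ᵥ* (U * Y)) := by
      rw [dotProduct]; simp [sq]
    have h2 : (z ᵥ* (U * Y)) ⬝ᵥ (z ᵥ* (U * Y))
        = z ⬝ᵥ ((U * Y) *ᵥ ((U * Y)ᵀ *ᵥ z)) := by
      rw [Matrix.dotProduct_mulVec, Matrix.mulVec_transpose]
    have h3 : (U * Y) * (U * Y)ᵀ = U * A * Uᵀ := by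
      rw [Matrix.transpose_mul, hA]; simp only [Matrix.mul_assoc]
    rw [h1, h2, Matrix.mulVec_mulVec, h3]
  have hLHS : ∑ U ∈ G, ∑ k, (Matrix.vecMul z (U * Y)) k ^ 2
      = μ * (∑ i, z i ^ 2) := by
    rw [Finset.sum_congr rfl hsum, ← dotProduct_sum', ← sum_mulVec', ← hM,
      hall z, dotProduct_smul]
    rw [dotProduct]
    simp [sq, smul_eq_mul]
  rw [hLHS]
  have hd0 : (d : ℝ) ≠ 0 := by positivity
  have hμval : μ = (G.card : ℝ) * (∑ j, ∑ k, Y j k ^ 2) / d := by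
    have h := htr1.symm.trans htr2
    rw [htrA] at h
    field_simp
    linarith [h]
  rw [hμval]
  field_simp
end

section
/- Let D ⊂ ℝ^d be a bounded open set with irreducible symmetry group and let T be an invertible d×d real matrix. Then I(T^{-⊤}(D)) = (1/d)·I(D)·‖T^{-1}‖²_HS·|det T^{-1}|, where T^{-⊤} denotes the inverse transpose of T. -/
open MeasureTheory Matrix

/-- The centroid of a set in `ℝ^d`. -/
noncomputable def centroid {d : ℕ} (Ω : Set (Fin d → ℝ)) : Fin d → ℝ :=
  ((volume Ω).toReal)⁻¹ • ∫ x in Ω, x ∂volume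

/-- The second moment of mass of a set about its centroid. -/
noncomputable def secondMoment {d : ℕ} (Ω : Set (Fin d → ℝ)) : ℝ :=
  ∫ x in Ω, ∑ i, (x i - centroid Ω i) ^ 2 ∂volume

lemma cov {d : ℕ} (M : Matrix (Fin d) (Fin d) ℝ) (hM : IsUnit M.det)
    {s : Set (Fin d → ℝ)} (hs : MeasurableSet s) (g : (Fin d → ℝ) → ℝ) :
    ∫ x in M.mulVec '' s, g x = |M.det| * ∫ x in s, g (M.mulVec x) := by
  have hf : ∀ x ∈ s, HasFDerivWithinAt M.mulVec
      (LinearMap.toContinuousLinearMap M.mulVecLin) s x := fun x _ =>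
    (LinearMap.toContinuousLinearMap M.mulVecLin).hasFDerivAt.hasFDerivWithinAt
  have hinj : Set.InjOn M.mulVec s :=
    (Matrix.mulVec_injective_iff_isUnit.2 ((Matrix.isUnit_iff_isUnit_det M).2 hM)).injOn
  rw [integral_image_eq_integral_abs_det_fderiv_smul volume hs hf hinj g]
  have hdet : (LinearMap.toContinuousLinearMap M.mulVecLin).det = M.det := by
    rw [ContinuousLinearMap.det]
    have h1 : (LinearMap.toContinuousLinearMap M.mulVecLin : (Fin d → ℝ) →ₗ[ℝ] (Fin d → ℝ)) = M.mulVecLin := rfl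
    rw [h1]
    have h2 : M.mulVecLin = Matrix.toLin' M := rfl
    rw [h2, LinearMap.det_toLin']
  simp only [hdet, smul_eq_mul]
  rw [integral_const_mul]

lemma vol_image {d : ℕ} (M : Matrix (Fin d) (Fin d) ℝ) (s : Set (Fin d → ℝ)) :
    volume (M.mulVec '' s) = ENNReal.ofReal |M.det| * volume s := by
  have := MeasureTheory.Measure.addHaar_image_linearMap volume M.mulVecLin s
  have h2 : M.mulVecLin = Matrix.toLin' M := rfl
  rwa [h2, LinearMap.det_toLin', show ⇑(Matrix.toLin' M) = M.mulVec from rfl] at this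

lemma integrableOn_of_bounded {d : ℕ} {E : Type*} [NormedAddCommGroup E]
    {s : Set (Fin d → ℝ)} (hbd : Bornology.IsBounded s)
    {g : (Fin d → ℝ) → E} (hg : Continuous g) : IntegrableOn g s volume := by
  obtain ⟨R, hR⟩ := hbd.subset_closedBall 0
  exact (hg.continuousOn.integrableOn_compact (isCompact_closedBall 0 R)).mono_set hR

lemma centroid_apply {d : ℕ} {Ω : Set (Fin d → ℝ)} (hbd : Bornology.IsBounded Ω) (i : Fin d) :
    centroid Ω i = ((volume Ω).toReal)⁻¹ * ∫ x in Ω, x i := by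
  have h : Integrable (fun x : Fin d → ℝ => x) (volume.restrict Ω) :=
    integrableOn_of_bounded hbd continuous_id
  have key : (∫ x in Ω, x) i = ∫ x in Ω, x i :=
    ((ContinuousLinearMap.proj (R := ℝ) (φ := fun _ : Fin d => ℝ) i).integral_comp_comm h).symm
  rw [centroid, Pi.smul_apply, smul_eq_mul, key]

lemma isBounded_image {d : ℕ} (M : Matrix (Fin d) (Fin d) ℝ) {D : Set (Fin d → ℝ)}
    (hbd : Bornology.IsBounded D) : Bornology.IsBounded (M.mulVec '' D) :=
  ((LinearMap.toContinuousLinearMap M.mulVecLin).lipschitz).isBounded_image hbd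

lemma centroid_image {d : ℕ} (M : Matrix (Fin d) (Fin d) ℝ) (hM : IsUnit M.det)
    {D : Set (Fin d → ℝ)} (hD : MeasurableSet D) (hbd : Bornology.IsBounded D) :
    centroid (M.mulVec '' D) = M.mulVec (centroid D) := by
  have hdet0 : |M.det| ≠ 0 := abs_ne_zero.mpr hM.ne_zero
  have hbd' : Bornology.IsBounded (M.mulVec '' D) := isBounded_image M hbd
  funext i
  rw [centroid_apply hbd', vol_image, cov M hM hD]
  have hint : ∀ j : Fin d, IntegrableOn (fun x : Fin d → ℝ => M i j * x j) D volume :=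
    fun j => integrableOn_of_bounded hbd (continuous_const.mul (continuous_apply j))
  have e1 : ∫ x in D, (M.mulVec x) i = ∑ j, M i j * ∫ x in D, x j := by
    simp only [Matrix.mulVec, dotProduct]
    rw [MeasureTheory.integral_finset_sum _ (fun j _ => hint j)]
    simp only [MeasureTheory.integral_const_mul]
  have e2 : (M.mulVec fun j => ((volume D).toReal)⁻¹ * ∫ x in D, x j) i
      = ∑ j, M i j * (((volume D).toReal)⁻¹ * ∫ x in D, x j) := by
    simp [Matrix.mulVec, dotProduct]
  have e3 : (M.mulVec (centroid D)) i
      = ∑ j, M i j * (((volume D).toReal)⁻¹ * ∫ x in D, x j) := by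
    rw [show centroid D = fun j => ((volume D).toReal)⁻¹ * ∫ x in D, x j from
      funext fun j => centroid_apply hbd j, e2]
  rw [e1, e3, ENNReal.toReal_mul, ENNReal.toReal_ofReal (abs_nonneg _)]
  have key : ∀ S : ℝ, (|M.det| * (volume D).toReal)⁻¹ * (|M.det| * S)
      = ((volume D).toReal)⁻¹ * S := by
    intro S; field_simp
  rw [key, Finset.mul_sum]
  exact Finset.sum_congr rfl fun j _ => by ring

lemma integral_bilinear {d : ℕ} {D : Set (Fin d → ℝ)} (hbd : Bornology.IsBounded D)
    (c a b : Fin d → ℝ) :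
    ∫ x in D, (∑ j, a j * (x j - c j)) * (∑ k, b k * (x k - c k))
      = ∑ j, ∑ k, a j * b k * ∫ x in D, (x j - c j) * (x k - c k) := by
  have hcont : ∀ j k : Fin d,
      Continuous fun x : Fin d → ℝ => a j * b k * ((x j - c j) * (x k - c k)) :=
    fun j k => continuous_const.mul
      (((continuous_apply j).sub continuous_const).mul
        ((continuous_apply k).sub continuous_const))
  calc ∫ x in D, (∑ j, a j * (x j - c j)) * (∑ k, b k * (x k - c k))
      = ∫ x in D, ∑ j, ∑ k, a j * b k * ((x j - c j) * (x k - c k)) := by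
        refine integral_congr_ae (Filter.Eventually.of_forall fun x => ?_)
        dsimp only
        rw [Finset.sum_mul_sum]
        exact Finset.sum_congr rfl fun j _ => Finset.sum_congr rfl fun k _ => by ring
    _ = ∑ j, ∑ k, ∫ x in D, a j * b k * ((x j - c j) * (x k - c k)) := by
        rw [MeasureTheory.integral_finset_sum _ (fun j _ =>
          integrable_finset_sum _ (fun k _ => integrableOn_of_bounded hbd (hcont j k)))]
        exact Finset.sum_congr rfl fun j _ =>
          MeasureTheory.integral_finset_sum _ (fun k _ => integrableOn_of_bounded hbd (hcont j k))
    _ = ∑ j, ∑ k, a j * b k * ∫ x in D, (x j - c j) * (x k - c k) := by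
        simp only [MeasureTheory.integral_const_mul]

/-- `I(T^{-⊤}(D)) = (1/d)·I(D)·‖T⁻¹‖²_HS·|det T⁻¹|` for `D` with
irreducible symmetry group. -/
theorem second_moment_of_inverse_transpose_image {d : ℕ} (hd : 0 < d)
    (D : Set (Fin d → ℝ)) (hopen : IsOpen D) (hbd : Bornology.IsBounded D)
    (hpos : 0 < volume D) (hfin : volume D < ⊤)
    (hirr : ∀ x : Fin d → ℝ, x ≠ 0 →
      Submodule.span ℝ {w : Fin d → ℝ | ∃ U : Matrix (Fin d) (Fin d) ℝ,
        (U ∈ Matrix.orthogonalGroup (Fin d) ℝ ∧ U.mulVec '' D = D) ∧ w = U.mulVec x}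
        = ⊤)
    (T : Matrix (Fin d) (Fin d) ℝ) (hT : IsUnit T.det) :
    secondMoment ((T⁻¹)ᵀ.mulVec '' D)
      = (1 / (d : ℝ)) * secondMoment D * (∑ i, ∑ j, (T⁻¹ i j) ^ 2)
          * |(T⁻¹).det| := by
  have hD : MeasurableSet D := hopen.measurableSet
  set c := centroid D with hc
  set J : Matrix (Fin d) (Fin d) ℝ := Matrix.of fun j k => ∫ x in D, (x j - c j) * (x k - c k)
    with hJ
  -- basic facts
  have hJapp : ∀ j k, J j k = ∫ x in D, (x j - c j) * (x k - c k) := fun j k => rfl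
  have hJsymm : ∀ j k, J j k = J k j := by
    intro j k
    rw [hJapp, hJapp]
    refine integral_congr_ae (Filter.Eventually.of_forall fun x => ?_)
    ring
  have hH : J.IsHermitian := by
    ext j k
    simp only [Matrix.conjTranspose_apply, star_trivial]
    exact hJsymm k j
  -- the difference formula
  have hdiff : ∀ (U : Matrix (Fin d) (Fin d) ℝ) (x : Fin d → ℝ) (i : Fin d),
      (U.mulVec x) i - (U.mulVec c) i = ∑ p, U i p * (x p - c p) := by
    intro U x i
    simp only [Matrix.mulVec, dotProduct, ← Finset.sum_sub_distrib]
    exact Finset.sum_congr rfl fun p _ => (mul_sub _ _ _).symm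
  -- conjugation invariance for symmetries
  have hconj : ∀ U : Matrix (Fin d) (Fin d) ℝ, U ∈ Matrix.orthogonalGroup (Fin d) ℝ →
      U.mulVec '' D = D → J = U * J * Uᵀ := by
    intro U hUo hUD
    have hUUt : U * Uᵀ = 1 := by
      have := (Matrix.mem_orthogonalGroup_iff (Fin d) ℝ).1 hUo
      exact this
    have hUtU : Uᵀ * U = 1 := mul_eq_one_comm.1 hUUt
    have hUdet : IsUnit U.det := IsUnit.of_mul_eq_one (a := U.det) Uᵀ.det
      (by rw [← Matrix.det_mul, hUUt, Matrix.det_one])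
    have habs : |U.det| = 1 := by
      have h2 : U.det * U.det = 1 := by
        have := congrArg Matrix.det hUUt
        rwa [Matrix.det_mul, Matrix.det_transpose, Matrix.det_one] at this
      rcases mul_self_eq_one_iff.1 h2 with h | h <;> rw [h] <;> norm_num
    have hUc : U.mulVec c = c := by
      have := centroid_image U hUdet hD hbd
      rw [hUD] at this
      exact this.symm
    ext j k
    have step1 : J j k = |U.det| * ∫ x in D, ((U.mulVec x) j - c j) * ((U.mulVec x) k - c k) := by
      rw [hJapp]
      conv_lhs => rw [← hUD]
      exact cov U hUdet hD fun y => (y j - c j) * (y k - c k)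
    have hdiff' : ∀ (x : Fin d → ℝ) (i : Fin d),
        (U.mulVec x) i - c i = ∑ p, U i p * (x p - c p) := by
      intro x i
      conv_lhs => rw [← hUc]
      exact hdiff U x i
    have step2 : ∫ x in D, ((U.mulVec x) j - c j) * ((U.mulVec x) k - c k)
        = ∫ x in D, (∑ p, U j p * (x p - c p)) * (∑ q, U k q * (x q - c q)) := by
      refine integral_congr_ae (Filter.Eventually.of_forall fun x => ?_)
      dsimp only
      rw [hdiff' x j, hdiff' x k]
    rw [step1, step2, habs, one_mul, integral_bilinear hbd c (U j) (U k)]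
    simp only [Matrix.mul_apply, Matrix.transpose_apply, Finset.sum_mul]
    rw [Finset.sum_comm]
    exact Finset.sum_congr rfl fun q _ => Finset.sum_congr rfl fun p _ => by
      rw [hJapp]; ring
  -- J is a scalar matrix
  set lam : ℝ := hH.eigenvalues ⟨0, hd⟩ with hlam
  set v : Fin d → ℝ := (WithLp.equiv 2 (Fin d → ℝ)) (hH.eigenvectorBasis ⟨0, hd⟩) with hv
  have hveig : J.mulVec v = lam • v := hH.mulVec_eigenvectorBasis ⟨0, hd⟩
  have hvne : v ≠ 0 := by
    intro h
    exact hH.eigenvectorBasis.toBasis.ne_zero ⟨0, hd⟩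
      (by rw [OrthonormalBasis.coe_toBasis]; exact (WithLp.equiv 2 (Fin d → ℝ)).injective (by show v = (WithLp.equiv 2 (Fin d → ℝ)) 0; rw [h]; simp))
  have hall : ∀ x : Fin d → ℝ, J.mulVec x = lam • x := by
    have horb : {w : Fin d → ℝ | ∃ U : Matrix (Fin d) (Fin d) ℝ,
        (U ∈ Matrix.orthogonalGroup (Fin d) ℝ ∧ U.mulVec '' D = D) ∧ w = U.mulVec v}
        ⊆ (LinearMap.ker (J.mulVecLin - lam • LinearMap.id) : Set (Fin d → ℝ)) := by
      rintro w ⟨U, ⟨hUo, hUD⟩, rfl⟩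
      have hUUt : U * Uᵀ = 1 := by
        have := (Matrix.mem_orthogonalGroup_iff (Fin d) ℝ).1 hUo
        exact this
      have hUtU : Uᵀ * U = 1 := mul_eq_one_comm.1 hUUt
      have hcj := hconj U hUo hUD
      have key : J.mulVec (U.mulVec v) = lam • (U.mulVec v) := by
        calc J.mulVec (U.mulVec v) = (J * U).mulVec v := by rw [Matrix.mulVec_mulVec]
          _ = (U * J).mulVec v := by
              conv_lhs => rw [hcj]
              rw [mul_assoc, mul_assoc, hUtU, mul_one]
          _ = U.mulVec (J.mulVec v) := by rw [Matrix.mulVec_mulVec]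
          _ = U.mulVec (lam • v) := by rw [hveig]
          _ = lam • U.mulVec v := Matrix.mulVec_smul U lam v
      simp only [SetLike.mem_coe, LinearMap.mem_ker, LinearMap.sub_apply,
        Matrix.mulVecLin_apply, LinearMap.smul_apply, LinearMap.id_apply, sub_eq_zero]
      exact key
    have hspan := hirr v hvne
    intro x
    have hx : x ∈ LinearMap.ker (J.mulVecLin - lam • LinearMap.id) := by
      have : (⊤ : Submodule ℝ (Fin d → ℝ)) ≤
          LinearMap.ker (J.mulVecLin - lam • LinearMap.id) := by
        rw [← hspan]
        exact Submodule.span_le.2 horb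
      exact this trivial
    have := LinearMap.mem_ker.1 hx
    simp only [LinearMap.sub_apply, Matrix.mulVecLin_apply, LinearMap.smul_apply,
      LinearMap.id_apply, sub_eq_zero] at this
    exact this
  have hJdiag : ∀ j k, J j k = if j = k then lam else 0 := by
    intro j k
    have h := congrFun (hall (Pi.single k 1)) j
    simp only [Matrix.mulVec, dotProduct, Pi.single_apply, mul_ite, mul_one, mul_zero,
      Finset.sum_ite_eq', Finset.mem_univ, if_true, Pi.smul_apply, smul_eq_mul] at h
    by_cases hjk : j = k
    · subst hjk; simpa using h
    · simpa [hjk] using h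
  -- secondMoment D = trace J
  have hIc : secondMoment D = ∑ i, J i i := by
    rw [secondMoment, MeasureTheory.integral_finset_sum _ (fun i _ =>
      (integrableOn_of_bounded hbd (((continuous_apply i).sub continuous_const).pow 2) :
        IntegrableOn (fun x : Fin d → ℝ => (x i - centroid D i) ^ 2) D volume))]
    refine Finset.sum_congr rfl fun i _ => ?_
    rw [hJapp]
    refine integral_congr_ae (Filter.Eventually.of_forall fun x => ?_)
    dsimp only
    rw [← hc]
    ring
  have hd0 : (d : ℝ) ≠ 0 := Nat.cast_ne_zero.2 hd.ne'
  have hlamval : lam = secondMoment D / d := by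
    have h1 : secondMoment D = d * lam := by
      rw [hIc]
      have : ∀ i : Fin d, J i i = lam := fun i => by rw [hJdiag i i, if_pos rfl]
      simp [this, Finset.sum_const, Finset.card_univ, mul_comm]
    rw [h1]
    field_simp
  -- now the final computation
  set A := (T⁻¹)ᵀ with hA
  have hTinv : IsUnit (T⁻¹).det := by
    have h0 : T.det ≠ 0 := hT.ne_zero
    rw [Matrix.det_nonsing_inv]
    simp only [Ring.inverse_eq_inv']
    exact (isUnit_iff_ne_zero).2 (inv_ne_zero h0)
  have hAdet : IsUnit A.det := by rw [hA, Matrix.det_transpose]; exact hTinv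
  have hcA : centroid (A.mulVec '' D) = A.mulVec c := centroid_image A hAdet hD hbd
  have hcontA : Continuous fun x : Fin d → ℝ => A.mulVec x :=
    (LinearMap.toContinuousLinearMap A.mulVecLin).continuous
  rw [show secondMoment (A.mulVec '' D)
      = ∫ x in A.mulVec '' D, ∑ i, (x i - (A.mulVec c) i) ^ 2 from by
    rw [secondMoment, hcA]]
  rw [cov A hAdet hD]
  have e : ∫ x in D, ∑ i, ((A.mulVec x) i - (A.mulVec c) i) ^ 2
      = ∑ i, ∑ j, ∑ k, A i j * A i k * J j k := by
    have hint : ∀ i : Fin d, IntegrableOn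
        (fun x : Fin d → ℝ => ((A.mulVec x) i - (A.mulVec c) i) ^ 2) D volume := by
      intro i
      have h1 : Continuous fun x : Fin d → ℝ => (A.mulVec x) i := (continuous_apply i).comp hcontA
      exact integrableOn_of_bounded hbd ((h1.sub continuous_const).pow 2)
    rw [MeasureTheory.integral_finset_sum _ (fun i _ => hint i)]
    refine Finset.sum_congr rfl fun i _ => ?_
    calc ∫ x in D, ((A.mulVec x) i - (A.mulVec c) i) ^ 2
        = ∫ x in D, (∑ j, A i j * (x j - c j)) * (∑ k, A i k * (x k - c k)) := by
          refine integral_congr_ae (Filter.Eventually.of_forall fun x => ?_)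
          dsimp only
          rw [sq, hdiff A x i]
      _ = ∑ j, ∑ k, A i j * A i k * ∫ x in D, (x j - c j) * (x k - c k) :=
          integral_bilinear hbd c (A i) (A i)
      _ = ∑ j, ∑ k, A i j * A i k * J j k := by
          exact Finset.sum_congr rfl fun j _ => Finset.sum_congr rfl fun k _ => by rw [hJapp]
  rw [e]
  have e2 : ∀ i, ∑ j, ∑ k, A i j * A i k * J j k = lam * ∑ j, A i j ^ 2 := by
    intro i
    rw [Finset.mul_sum]
    refine Finset.sum_congr rfl fun j _ => ?_
    rw [Finset.sum_eq_single j
      (fun k _ hk => by rw [hJdiag j k, if_neg (fun h => hk h.symm), mul_zero])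
      (fun h => absurd (Finset.mem_univ j) h)]
    rw [hJdiag j j, if_pos rfl]
    ring
  have e3 : ∑ i, ∑ j, ∑ k, A i j * A i k * J j k = lam * ∑ i, ∑ j, A i j ^ 2 := by
    rw [Finset.mul_sum]
    exact Finset.sum_congr rfl fun i _ => e2 i
  rw [e3]
  have hsum : ∑ i, ∑ j, A i j ^ 2 = ∑ i, ∑ j, (T⁻¹ i j) ^ 2 := by
    rw [hA, Finset.sum_comm]
    exact Finset.sum_congr rfl fun i _ => Finset.sum_congr rfl fun j _ => by
      rw [Matrix.transpose_apply]
  have hdetA : |A.det| = |(T⁻¹).det| := by rw [hA, Matrix.det_transpose]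
  rw [hdetA, hsum, hlamval]
  ring
end

section
/- Let D be the unit cube centered at the origin in ℝ³, T_ε = diag(1,1,ε), and F(ε) = λ₁(T_ε(D)) · V(T_ε(D))^{7/3} / I(T_ε(D)) = 12π²·(2+ε^{-2})·ε^{4/3}/(2+ε²). Then F(ε) → ∞ as ε → 0⁺. -/
open Filter Real

/-- the functional `λ₁ · V^{1+4/3} / I` on the squashed boxes
`1 × 1 × ε` equals `12π²(2+ε⁻²)ε^{4/3}/(2+ε²)`, which blows up as `ε → 0⁺`. -/
theorem squashed_box_unbounded :
    Filter.Tendsto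
      (fun ε : ℝ => 12 * Real.pi ^ 2 * (2 + ε⁻¹ ^ 2) * ε ^ ((4 : ℝ) / 3) / (2 + ε ^ 2))
      (nhdsWithin 0 (Set.Ioi 0)) Filter.atTop := by
  have hpi : (0:ℝ) < Real.pi ^ 2 := by positivity
  have h1 : Filter.Tendsto (fun ε : ℝ => ε ^ ((2:ℝ)/3)) (nhdsWithin 0 (Set.Ioi 0))
      (nhdsWithin 0 (Set.Ioi 0)) := by
    rw [tendsto_nhdsWithin_iff]
    constructor
    · have hc : Filter.Tendsto (fun ε : ℝ => ε ^ ((2:ℝ)/3)) (nhds 0) (nhds 0) := by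
        have := (Real.continuousAt_rpow_const 0 ((2:ℝ)/3) (Or.inr (by norm_num))).tendsto
        simpa using this
      exact hc.mono_left nhdsWithin_le_nhds
    · filter_upwards [self_mem_nhdsWithin] with x hx
      exact Real.rpow_pos_of_pos hx _
  have h2 : Filter.Tendsto (fun ε : ℝ => (ε ^ ((2:ℝ)/3))⁻¹) (nhdsWithin 0 (Set.Ioi 0))
      Filter.atTop := h1.inv_tendsto_nhdsGT_zero
  have h3 : Filter.Tendsto (fun ε : ℝ => 4 * Real.pi ^ 2 * (ε ^ ((2:ℝ)/3))⁻¹)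
      (nhdsWithin 0 (Set.Ioi 0)) Filter.atTop :=
    h2.const_mul_atTop (by positivity)
  apply Filter.tendsto_atTop_mono' _ _ h3
  filter_upwards [self_mem_nhdsWithin, Icc_mem_nhdsGT_of_mem (by norm_num : (0:ℝ) ∈ Set.Ico 0 1)]
    with ε hε hε1
  have hε0 : 0 < ε := hε
  have hεle : ε ≤ 1 := hε1.2
  have hd : 0 < 2 + ε ^ 2 := by positivity
  have hd3 : 2 + ε ^ 2 ≤ 3 := by nlinarith
  have e1 : ε⁻¹ ^ 2 = ε ^ (-(2:ℝ)) := by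
    rw [Real.rpow_neg hε0.le, inv_pow, ← Real.rpow_natCast ε 2]
    norm_num
  have key : ε⁻¹ ^ 2 * ε ^ ((4:ℝ)/3) = (ε ^ ((2:ℝ)/3))⁻¹ := by
    rw [e1, ← Real.rpow_add hε0, show (-(2:ℝ) + 4/3) = -(2/3) by norm_num,
      Real.rpow_neg hε0.le]
  have hu : 0 < (ε ^ ((2:ℝ)/3))⁻¹ := by
    have := Real.rpow_pos_of_pos hε0 ((2:ℝ)/3); positivity
  have hv : 0 < ε ^ ((4:ℝ)/3) := Real.rpow_pos_of_pos hε0 _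
  rw [le_div_iff₀ hd]
  nlinarith [key, mul_le_mul_of_nonneg_left hd3 (by positivity :
    (0:ℝ) ≤ 4 * Real.pi ^ 2 * (ε ^ ((2:ℝ)/3))⁻¹), mul_pos hpi hv]
end

section
/- Let T be an invertible d×d real matrix and for n ≥ 1 let τ₁ ≤ … ≤ τ_n be the n smallest values (with multiplicity) of 4π²|y|² over y in the dual lattice T^{-⊤}ℤ^d (these are the smallest n Laplace eigenvalues of the flat torus ℝ^d/Tℤ^d). Let σ₁ ≤ … ≤ σ_n be the corresponding values for the cubical lattice ℤ^d. Then τ₁ + … + τ_n ≤ (σ₁ + … + σ_n) · ‖T^{-⊤}‖²_HS/d, with equality when T is a scalar multiple of an orthogonal matrix. -/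
open Matrix

/-- The dual lattice `T^{-⊤}ℤ^d` of the lattice `Tℤ^d`. -/
def dualLattice {d : ℕ} (T : Matrix (Fin d) (Fin d) ℝ) : Set (Fin d → ℝ) :=
  {y | ∃ m : Fin d → ℤ, y = (T⁻¹)ᵀ.mulVec fun i => (m i : ℝ)}

/-- `τ` lists, in nondecreasing order and with multiplicity, the `n` smallest values
of `4π²|y|²` over `y` in the set `L`. -/
def IsNSmallestEigs {d n : ℕ} (L : Set (Fin d → ℝ)) (τ : Fin n → ℝ) : Prop :=
  ∃ e : Fin n → (Fin d → ℝ), Function.Injective e ∧ (∀ i, e i ∈ L) ∧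
    (∀ i, τ i = 4 * Real.pi ^ 2 * ∑ j, (e i j) ^ 2) ∧ Monotone τ ∧
    ∀ y ∈ L, y ∉ Set.range e → ∀ i, τ i ≤ 4 * Real.pi ^ 2 * ∑ j, (y j) ^ 2

/-- the sum of the `n` smallest values is at most the sum over any `n` distinct points. -/
lemma sum_smallest_le {d n : ℕ} {L : Set (Fin d → ℝ)} {τ : Fin n → ℝ}
    (hτ : IsNSmallestEigs L τ) (f : Fin n → (Fin d → ℝ))
    (hfi : Function.Injective f) (hfL : ∀ i, f i ∈ L) :
    (∑ i, τ i) ≤ ∑ i, 4 * Real.pi ^ 2 * ∑ j, (f i j) ^ 2 := by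
  obtain ⟨e, hei, heL, hev, hmono, hmin⟩ := hτ
  set v : Fin n → ℝ := fun i => 4 * Real.pi ^ 2 * ∑ j, (f i j) ^ 2 with hv
  have hρ : ∑ i, v i = ∑ i, v (Tuple.sort v i) := (Equiv.sum_comp (Tuple.sort v) v).symm
  show (∑ i, τ i) ≤ ∑ i, v i
  rw [hρ]
  apply Finset.sum_le_sum
  intro k _
  by_contra hk
  push_neg at hk
  have key : ∀ j : Fin n, j ≤ k → ∃ m : Fin n, m < k ∧ e m = f (Tuple.sort v j) := by
    intro j hj
    have hvj : v (Tuple.sort v j) < τ k :=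
      lt_of_le_of_lt (Tuple.monotone_sort v hj) hk
    have hrange : f (Tuple.sort v j) ∈ Set.range e := by
      by_contra hr
      exact absurd (hmin _ (hfL _) hr k) (not_le.mpr hvj)
    obtain ⟨m, hm⟩ := hrange
    refine ⟨m, ?_, hm⟩
    by_contra hmk
    push_neg at hmk
    have h1 : τ k ≤ τ m := hmono hmk
    have h2 : τ m = v (Tuple.sort v j) := by rw [hev, hm]
    rw [h2] at h1
    exact absurd h1 (not_le.mpr hvj)
  have hkn : (k : ℕ) + 1 ≤ n := k.2
  choose m hmlt hme using fun (j : Fin ((k : ℕ) + 1)) =>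
    key (Fin.castLE hkn j) (by rw [Fin.le_def]; simpa using Nat.lt_succ_iff.mp j.2)
  have hχ : Function.Injective (fun j : Fin ((k : ℕ) + 1) =>
      (⟨(m j : ℕ), by have := hmlt j; rwa [Fin.lt_def] at this⟩ : Fin (k : ℕ))) := by
    intro a b hab
    simp only [Fin.mk.injEq] at hab
    have hmab : m a = m b := Fin.ext hab
    have : f (Tuple.sort v (Fin.castLE hkn a)) = f (Tuple.sort v (Fin.castLE hkn b)) := by
      rw [← hme a, ← hme b, hmab]
    have := (Tuple.sort v).injective (hfi this)
    exact Fin.castLE_injective hkn this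
  have hcard := Fintype.card_le_of_injective _ hχ
  simp at hcard


lemma signSum (d : ℕ) (j j' : Fin d) :
    ∑ ε : Fin d → Bool, (if ε j then (1:ℝ) else -1) * (if ε j' then (1:ℝ) else -1)
      = if j = j' then (2:ℝ)^d else 0 := by
  rcases eq_or_ne j j' with h | h
  · subst h
    rw [if_pos rfl]
    have h1 : ∀ ε : Fin d → Bool,
        (if ε j then (1:ℝ) else -1) * (if ε j then (1:ℝ) else -1) = 1 := by
      intro ε; by_cases hb : ε j <;> simp [hb]
    rw [Finset.sum_congr rfl (fun ε _ => h1 ε), Finset.sum_const, Finset.card_univ]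
    simp
  · rw [if_neg h]
    set G : (Fin d → Bool) → ℝ :=
      fun ε => (if ε j then (1:ℝ) else -1) * (if ε j' then (1:ℝ) else -1) with hG
    set F : (Fin d → Bool) → (Fin d → Bool) := fun ε => Function.update ε j (!(ε j)) with hF
    have hinv : Function.Involutive F := by
      intro ε; funext a
      by_cases ha : a = j
      · subst ha; simp [hF]
      · simp [hF, Function.update_of_ne ha]
    have hswap : ∀ ε, G (F ε) = -(G ε) := by
      intro ε
      have h1 : F ε j = !(ε j) := by simp [hF]
      have h2 : F ε j' = ε j' := by simp [hF, Function.update_of_ne (Ne.symm h)]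
      rw [hG]
      simp only [h1, h2]
      by_cases hb : ε j <;> by_cases hb' : ε j' <;> simp [hb, hb']
    have hs : ∑ ε, G (F ε) = ∑ ε, G ε :=
      Fintype.sum_bijective F hinv.bijective (fun ε => G (F ε)) G (fun ε => rfl)
    simp only [hswap, Finset.sum_neg_distrib] at hs
    linarith

lemma shiftSum {d : ℕ} [NeZero d] (x : Fin d → ℝ) (j : Fin d) :
    ∑ k : Fin d, x (j + k) ^ 2 = ∑ a, x a ^ 2 :=
  Fintype.sum_equiv (Equiv.addLeft j) _ _ (fun k => rfl)

lemma signExpand {d : ℕ} (a : Fin d → ℝ) :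
    ∑ ε : Fin d → Bool, (∑ j, (if ε j then (1:ℝ) else -1) * a j) ^ 2
      = 2 ^ d * ∑ j, a j ^ 2 := by
  have hexp : ∀ ε : Fin d → Bool, (∑ j, (if ε j then (1:ℝ) else -1) * a j) ^ 2
      = ∑ j, ∑ j', (a j * a j') *
        ((if ε j then (1:ℝ) else -1) * (if ε j' then (1:ℝ) else -1)) := by
    intro ε
    rw [sq, Finset.sum_mul_sum]
    exact Finset.sum_congr rfl fun j _ => Finset.sum_congr rfl fun j' _ => by ring
  simp only [hexp]
  rw [Finset.sum_comm]
  have h2 : ∀ j, (∑ ε : Fin d → Bool, ∑ j', (a j * a j') *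
      ((if ε j then (1:ℝ) else -1) * (if ε j' then (1:ℝ) else -1)))
      = 2 ^ d * a j ^ 2 := by
    intro j
    rw [Finset.sum_comm]
    have h3 : ∀ j', (∑ ε : Fin d → Bool, (a j * a j') *
        ((if ε j then (1:ℝ) else -1) * (if ε j' then (1:ℝ) else -1)))
        = (a j * a j') * (if j = j' then (2:ℝ)^d else 0) := by
      intro j'
      rw [← Finset.mul_sum, signSum]
    rw [Finset.sum_congr rfl (fun j' _ => h3 j'),
      Finset.sum_eq_single_of_mem j (Finset.mem_univ j)
        (fun j' _ hj' => by rw [if_neg (fun h => hj' h.symm), mul_zero])]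
    rw [if_pos rfl]; ring
  simp only [h2]
  rw [Finset.mul_sum]

lemma avgIdentity {d : ℕ} [NeZero d] (B : Matrix (Fin d) (Fin d) ℝ) (x : Fin d → ℝ) :
    ∑ g : Fin d × (Fin d → Bool), ∑ i,
        (B.mulVec (fun j => (if g.2 j then (1:ℝ) else -1) * x (j + g.1)) i) ^ 2
      = 2 ^ d * ((∑ i, ∑ j, B i j ^ 2) * ∑ a, x a ^ 2) := by
  rw [Fintype.sum_prod_type]
  have hk : ∀ k : Fin d, ∑ ε : Fin d → Bool, ∑ i,
      (B.mulVec (fun j => (if ε j then (1:ℝ) else -1) * x (j + k)) i) ^ 2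
      = 2 ^ d * ∑ i, ∑ j, B i j ^ 2 * x (j + k) ^ 2 := by
    intro k
    rw [Finset.sum_comm]
    have hi : ∀ i, ∑ ε : Fin d → Bool,
        (B.mulVec (fun j => (if ε j then (1:ℝ) else -1) * x (j + k)) i) ^ 2
        = 2 ^ d * ∑ j, B i j ^ 2 * x (j + k) ^ 2 := by
      intro i
      have e1 : ∀ ε : Fin d → Bool,
          (∑ j, B i j * ((if ε j then (1:ℝ) else -1) * x (j + k))) ^ 2
          = (∑ j, (if ε j then (1:ℝ) else -1) * (B i j * x (j + k))) ^ 2 := by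
        intro ε; congr 1; exact Finset.sum_congr rfl fun j _ => by ring
      simp only [Matrix.mulVec, dotProduct]
      rw [Finset.sum_congr rfl fun ε _ => e1 ε, signExpand (fun j => B i j * x (j + k))]
      congr 1
      exact Finset.sum_congr rfl fun j _ => by ring
    simp only [hi]
    rw [Finset.mul_sum]
  simp only [hk]
  rw [← Finset.mul_sum]
  congr 1
  rw [Finset.sum_comm]
  have key2 : ∀ i, ∑ k : Fin d, ∑ j, B i j ^ 2 * x (j + k) ^ 2
      = ∑ j, B i j ^ 2 * ∑ a, x a ^ 2 := by
    intro i
    rw [Finset.sum_comm]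
    exact Finset.sum_congr rfl fun j _ => by
      rw [← Finset.mul_sum, shiftSum]
  rw [Finset.sum_mul]
  refine Finset.sum_congr rfl fun i _ => ?_
  rw [Finset.sum_mul]
  exact key2 i

lemma mem_dualLattice_one {d : ℕ} {y : Fin d → ℝ} :
    y ∈ dualLattice (1 : Matrix (Fin d) (Fin d) ℝ) ↔ ∃ m : Fin d → ℤ, y = fun i => (m i : ℝ) := by
  unfold dualLattice
  simp [inv_one, Matrix.transpose_one, Matrix.one_mulVec]

/-- the sum of the `n` smallest Laplace eigenvalues of the flat torus
`ℝ^d/Tℤ^d` is at most that of the cubical torus times `‖T^{-⊤}‖²_HS/d`, with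
equality when `T` is a scalar multiple of an orthogonal matrix. -/
theorem flat_torus_eigenvalue_sum {d n : ℕ} (hd : 0 < d) (hn : 1 ≤ n)
    (T : Matrix (Fin d) (Fin d) ℝ) (hT : IsUnit T.det)
    (τ σ : Fin n → ℝ)
    (hτ : IsNSmallestEigs (dualLattice T) τ)
    (hσ : IsNSmallestEigs (dualLattice (1 : Matrix (Fin d) (Fin d) ℝ)) σ) :
    (∑ i, τ i) ≤ (∑ i, σ i) * (∑ i, ∑ j, ((T⁻¹)ᵀ i j) ^ 2) / d ∧
    (∀ c : ℝ, c ≠ 0 → ∀ U ∈ Matrix.orthogonalGroup (Fin d) ℝ, T = c • U →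
      (∑ i, τ i) = (∑ i, σ i) * (∑ i, ∑ j, ((T⁻¹)ᵀ i j) ^ 2) / d) := by
  haveI : NeZero d := ⟨hd.ne'⟩
  have hd0 : (0:ℝ) < d := by exact_mod_cast hd
  have h2d : (0:ℝ) < 2 ^ d := by positivity
  set B : Matrix (Fin d) (Fin d) ℝ := (T⁻¹)ᵀ with hBdef
  have hBdet : IsUnit B.det := by
    rw [hBdef, Matrix.det_transpose]; exact T.isUnit_nonsing_inv_det hT
  have hBinj : Function.Injective B.mulVec :=
    Matrix.mulVec_injective_iff_isUnit.mpr ((Matrix.isUnit_iff_isUnit_det _).mpr hBdet)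
  obtain ⟨eσ, hσinj, hσL, hσv, hσmono, hσmin⟩ := hσ
  choose mm hmm using fun i => (mem_dualLattice_one.mp (hσL i))
  set nB : ℝ := ∑ i, ∑ j, B i j ^ 2 with hnBdef
  have main : (∑ i, τ i) ≤ (∑ i, σ i) * nB / d := by
    have hstep : ∀ g : Fin d × (Fin d → Bool),
        (∑ i, τ i) ≤ ∑ i, 4 * Real.pi ^ 2 *
          ∑ j, (B.mulVec (fun j' => (if g.2 j' then (1:ℝ) else -1) * eσ i (j' + g.1)) j) ^ 2 := by
      intro g
      refine sum_smallest_le hτ _ ?_ ?_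
      · intro a b hab
        apply hσinj
        have h1 := hBinj hab
        funext cc
        have h2 := congrFun h1 (cc - g.1)
        simp only [sub_add_cancel] at h2
        have hne : (if g.2 (cc - g.1) then (1:ℝ) else -1) ≠ 0 := by split <;> norm_num
        exact mul_left_cancel₀ hne h2
      · intro i
        refine ⟨fun j => (if g.2 j then (1:ℤ) else -1) * mm i (j + g.1), ?_⟩
        rw [← hBdef]
        exact congrArg B.mulVec (by
          funext j
          rw [hmm i]
          by_cases hb : g.2 j <;> simp [hb])
    have h1 : ∑ _g : Fin d × (Fin d → Bool), (∑ i, τ i) ≤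
        ∑ g : Fin d × (Fin d → Bool), ∑ i, 4 * Real.pi ^ 2 *
          ∑ j, (B.mulVec (fun j' => (if g.2 j' then (1:ℝ) else -1) * eσ i (j' + g.1)) j) ^ 2 :=
      Finset.sum_le_sum fun g _ => hstep g
    have hcard : ∑ _g : Fin d × (Fin d → Bool), (∑ i, τ i) = ((d : ℝ) * 2 ^ d) * ∑ i, τ i := by
      rw [Finset.sum_const, Finset.card_univ, nsmul_eq_mul]
      congr 1
      simp [Fintype.card_prod, Fintype.card_fun]
    have hrhs : (∑ g : Fin d × (Fin d → Bool), ∑ i, 4 * Real.pi ^ 2 *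
        ∑ j, (B.mulVec (fun j' => (if g.2 j' then (1:ℝ) else -1) * eσ i (j' + g.1)) j) ^ 2)
        = 2 ^ d * (nB * ∑ i, σ i) := by
      rw [Finset.sum_comm]
      have hper : ∀ i, (∑ g : Fin d × (Fin d → Bool), 4 * Real.pi ^ 2 *
          ∑ j, (B.mulVec (fun j' => (if g.2 j' then (1:ℝ) else -1) * eσ i (j' + g.1)) j) ^ 2)
          = 4 * Real.pi ^ 2 * (2 ^ d * (nB * ∑ a, eσ i a ^ 2)) := by
        intro i
        rw [← Finset.mul_sum, avgIdentity B (eσ i)]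
      have hfin : ∀ i, 4 * Real.pi ^ 2 * (2 ^ d * (nB * ∑ a, eσ i a ^ 2))
          = 2 ^ d * (nB * σ i) := by
        intro i; rw [hσv i]; ring
      rw [Finset.sum_congr rfl fun i _ => hper i, Finset.sum_congr rfl fun i _ => hfin i,
        ← Finset.mul_sum, ← Finset.mul_sum]
    rw [hcard] at h1
    rw [hrhs] at h1
    have h4 : 2 ^ d * ((∑ i, τ i) * (d:ℝ)) ≤ 2 ^ d * ((∑ i, σ i) * nB) := by linarith
    have h5 := (mul_le_mul_iff_right₀ h2d).mp h4
    rw [le_div_iff₀ hd0]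
    exact h5
  refine ⟨main, ?_⟩
  intro c hc U hU hTU
  have hUo : U * Uᵀ = 1 := by
    have h := (Matrix.mem_orthogonalGroup_iff (Fin d) ℝ).mp hU
    exact h
  have hUU : Uᵀ * U = 1 := mul_eq_one_comm.mp hUo
  have hBU : B = c⁻¹ • U := by
    have hTinv : T⁻¹ = c⁻¹ • Uᵀ := by
      apply Matrix.inv_eq_right_inv
      rw [hTU, Matrix.mul_smul, Matrix.smul_mul, smul_smul, inv_mul_cancel₀ hc, hUo, one_smul]
    rw [hBdef, hTinv, Matrix.transpose_smul, Matrix.transpose_transpose]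
  have hUnorm : ∀ x : Fin d → ℝ, ∑ j, (U.mulVec x j) ^ 2 = ∑ j, x j ^ 2 := by
    intro x
    have h1 : ∑ j, (U.mulVec x j) ^ 2 = (U.mulVec x) ⬝ᵥ (U.mulVec x) := by
      simp [dotProduct, sq]
    rw [h1, Matrix.dotProduct_mulVec, ← Matrix.vecMul_transpose, Matrix.vecMul_vecMul, hUU,
      Matrix.vecMul_one]
    simp [dotProduct, sq]
  have hUsq : ∑ i, ∑ j, U i j ^ 2 = (d : ℝ) := by
    have h1 : ∀ i, ∑ j, U i j ^ 2 = (U * Uᵀ) i i := by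
      intro i
      rw [Matrix.mul_apply]
      exact Finset.sum_congr rfl fun j _ => by rw [Matrix.transpose_apply, sq]
    rw [Finset.sum_congr rfl fun i _ => h1 i]
    simp [hUo, Matrix.one_apply]
  have hnB : nB = c⁻¹ ^ 2 * d := by
    rw [hnBdef, hBU]
    simp only [Matrix.smul_apply, smul_eq_mul, mul_pow, ← Finset.mul_sum]
    rw [hUsq]
  have hval : ∀ x : Fin d → ℝ, ∑ j, (B.mulVec x j) ^ 2 = c⁻¹ ^ 2 * ∑ j, x j ^ 2 := by
    intro x
    rw [hBU, Matrix.smul_mulVec]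
    simp only [Pi.smul_apply, smul_eq_mul, mul_pow, ← Finset.mul_sum]
    rw [hUnorm]
  have hτ' : IsNSmallestEigs (dualLattice T) (fun i => c⁻¹ ^ 2 * σ i) := by
    refine ⟨fun i => B.mulVec (eσ i), fun a b hab => hσinj (hBinj hab), ?_, ?_, ?_, ?_⟩
    · intro i
      refine ⟨mm i, ?_⟩
      show B.mulVec (eσ i) = _
      rw [hBdef, hmm i]
    · intro i
      show c⁻¹ ^ 2 * σ i = 4 * Real.pi ^ 2 * ∑ j, (B.mulVec (eσ i) j) ^ 2
      rw [hval (eσ i), hσv i]; ring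
    · intro a b hab
      exact mul_le_mul_of_nonneg_left (hσmono hab) (by positivity)
    · intro y hy hyr i
      obtain ⟨m, hm⟩ := hy
      have hmem : (fun j => (m j : ℝ)) ∈ dualLattice 1 := mem_dualLattice_one.mpr ⟨m, rfl⟩
      have hnr : (fun j => (m j : ℝ)) ∉ Set.range eσ := by
        rintro ⟨i', hi'⟩
        refine hyr ⟨i', ?_⟩
        show B.mulVec (eσ i') = y
        rw [hi', hm, hBdef]
      have hle1 := hσmin _ hmem hnr i
      have hy2 : ∑ j, y j ^ 2 = c⁻¹ ^ 2 * ∑ j, ((m j : ℝ)) ^ 2 := by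
        rw [hm, ← hBdef]
        exact hval _
      calc c⁻¹ ^ 2 * σ i ≤ c⁻¹ ^ 2 * (4 * Real.pi ^ 2 * ∑ j, ((m j : ℝ)) ^ 2) :=
            mul_le_mul_of_nonneg_left hle1 (by positivity)
        _ = 4 * Real.pi ^ 2 * ∑ j, y j ^ 2 := by rw [hy2]; ring
  have hge : c⁻¹ ^ 2 * ∑ i, σ i ≤ ∑ i, τ i := by
    obtain ⟨eτ, hτinj, hτL, hτv, _, _⟩ := hτ
    have h1 := sum_smallest_le hτ' eτ hτinj hτL
    calc c⁻¹ ^ 2 * ∑ i, σ i = ∑ i, c⁻¹ ^ 2 * σ i := Finset.mul_sum _ _ _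
      _ ≤ ∑ i, 4 * Real.pi ^ 2 * ∑ j, (eτ i j) ^ 2 := h1
      _ = ∑ i, τ i := Finset.sum_congr rfl fun i _ => (hτv i).symm
  have hle : ∑ i, τ i ≤ c⁻¹ ^ 2 * ∑ i, σ i := by
    rw [hnB] at main
    calc ∑ i, τ i ≤ (∑ i, σ i) * (c⁻¹ ^ 2 * d) / d := main
      _ = c⁻¹ ^ 2 * ∑ i, σ i := by field_simp
  rw [le_antisymm hle hge, hnB]
  field_simp
end
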